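/- arXiv:1504.04532 — 3 statements merged into one kernel-verified Lean document; each statement's English description precedes it below -/
import Mathlib

section
/- For a uniformly random mapping f of an n-element set to itself, the number λ of cyclic vertices (vertices lying on a cycle of the functional graph) satisfies P(λ = N) = N·(n−1)!/(n^N·(n−N)!) for every 1 ≤ N ≤ n. -/
open Finset Function
open scoped Classical
namespace RandMap
variable {n : ℕ}
def cyc (g : Fin n → Fin n) (v : Fin n) : Prop := ∃ k, 1 ≤ k ∧ g^[k] v = v

lemma cyc_of_fixed {g : Fin n → Fin n} {v : Fin n} (h : g v = v) : cyc g v :=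
  ⟨1, le_refl _, h⟩

lemma cyc_pre {g : Fin n → Fin n} {v : Fin n} (h : cyc g v) :
    ∃ w, cyc g w ∧ g w = v := by
  obtain ⟨k, hk1, hk⟩ := h
  refine ⟨g^[k-1] v, ⟨k, hk1, ?_⟩, ?_⟩
  · calc g^[k] (g^[k-1] v) = g^[k + (k-1)] v := (Function.iterate_add_apply g k (k-1) v).symm
      _ = g^[(k-1) + k] v := by rw [Nat.add_comm]
      _ = g^[k-1] (g^[k] v) := Function.iterate_add_apply g (k-1) k v
      _ = g^[k-1] v := by rw [hk]
  · calc g (g^[k-1] v) = g^[(k-1)+1] v := (Function.iterate_succ_apply' g (k-1) v).symm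
      _ = g^[k] v := by rw [Nat.sub_add_cancel hk1]
      _ = v := hk

/-- once an orbit enters an invariant set it stays -/
lemma iterate_mem_of_mem {g : Fin n → Fin n} {D : Finset (Fin n)}
    (hD : ∀ d ∈ D, g d ∈ D) {v : Fin n} (hv : v ∈ D) : ∀ j, g^[j] v ∈ D := by
  intro j; induction j with
  | zero => simpa
  | succ j ih => rw [Function.iterate_succ_apply']; exact hD _ ih

/-- If `v` is cyclic and not in an invariant set `D`, its whole orbit avoids `D`. -/
lemma orbit_avoid {g : Fin n → Fin n} {D : Finset (Fin n)}
    (hD : ∀ d ∈ D, g d ∈ D) {v : Fin n} {k : ℕ} (hk1 : 1 ≤ k) (hk : g^[k] v = v)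
    (hv : v ∉ D) : ∀ j, g^[j] v ∉ D := by
  intro j hj
  apply hv
  have h1 : g^[(j+1)*k] v = v := by
    have : IsFixedPt g^[k] v := hk
    have := this.iterate (j+1)
    rwa [← Function.iterate_mul, mul_comm] at this
  have h2 : (j+1)*k = ((j+1)*k - j) + j := by
    have : j ≤ (j+1)*k := le_trans (Nat.le_succ j) (Nat.le_mul_of_pos_right _ hk1)
    omega
  rw [h2, Function.iterate_add_apply] at h1
  rw [← h1]
  exact iterate_mem_of_mem hD hj _

/-- iterates agree on an invariant set where two functions agree -/
lemma iterate_congr {g g' : Fin n → Fin n} {C : Set (Fin n)}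
    (hC : ∀ w ∈ C, g w ∈ C ∧ g w = g' w) {v : Fin n} (hv : v ∈ C) :
    ∀ j, g^[j] v = g'^[j] v ∧ g^[j] v ∈ C := by
  intro j; induction j with
  | zero => simpa
  | succ j ih =>
    obtain ⟨h1, h2⟩ := ih
    rw [Function.iterate_succ_apply', Function.iterate_succ_apply']
    exact ⟨by rw [← h1]; exact (hC _ h2).2, by exact ((hC _ h2).1)⟩

lemma cyc_of_injective {g : Fin n → Fin n} (hg : Function.Injective g) (v : Fin n) :
    cyc g v := by
  obtain ⟨i, j, hne, hij⟩ := Finite.exists_ne_map_eq_of_infinite (fun k : ℕ => g^[k] v)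

  rcases Nat.lt_or_ge i j with h | h
  · refine ⟨j - i, by omega, ?_⟩
    have : g^[i] (g^[j-i] v) = g^[i] v := by
      rw [← Function.iterate_add_apply]
      have : i + (j - i) = j := by omega
      rw [this, hij]
    exact hg.iterate i this
  · have hij' : j < i := by omega
    refine ⟨i - j, by omega, ?_⟩
    have : g^[j] (g^[i-j] v) = g^[j] v := by
      rw [← Function.iterate_add_apply]
      have : j + (i - j) = i := by omega
      rw [this, ← hij]
    exact hg.iterate j this



/-- functions fixing everything outside `A` -/
noncomputable def ES (A : Finset (Fin n)) : Finset (Fin n → Fin n) :=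
  univ.filter (fun g => ∀ v ∉ A, g v = v)

/-- members of `ES A` whose cyclic set is exactly `A' ∪ Aᶜ` -/
noncomputable def CS (A A' : Finset (Fin n)) : Finset (Fin n → Fin n) :=
  (ES A).filter (fun g => ∀ v, cyc g v ↔ (v ∈ A' ∨ v ∉ A))

/-- bijections fixing everything outside `A'` -/
noncomputable def PS (A' : Finset (Fin n)) : Finset (Fin n → Fin n) :=
  (ES A').filter Function.Bijective

lemma card_ES (A : Finset (Fin n)) : (ES A).card = n ^ A.card := by
  have : (ES A).card = (univ : Finset (↥A → Fin n)).card := by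
    apply Finset.card_bij (fun g _ => fun a : ↥A => g a)
    · intro g hg; exact mem_univ _
    · intro g hg g' hg' h
      simp only [ES, mem_filter] at hg hg'
      funext v
      by_cases hv : v ∈ A
      · exact congrFun h ⟨v, hv⟩
      · rw [hg.2 v hv, hg'.2 v hv]
    · intro t _
      refine ⟨fun v => if h : v ∈ A then t ⟨v, h⟩ else v, ?_, ?_⟩
      · simp only [ES, mem_filter, mem_univ, true_and]
        intro v hv; simp [hv]
      · funext a; simp [a.2]
  rw [this, Finset.card_univ, Fintype.card_fun]
  simp

lemma mem_PS_maps {A : Finset (Fin n)} {g : Fin n → Fin n} (hg : g ∈ PS A)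
    {v : Fin n} (hv : v ∈ A) : g v ∈ A := by
  simp only [PS, ES, mem_filter, mem_univ, true_and] at hg
  by_contra h
  have h1 : g (g v) = g v := hg.1 _ h
  have h2 : g v = v := hg.2.1 h1
  rw [h2] at h; exact h hv

lemma card_PS (A : Finset (Fin n)) : (PS A).card = (A.card).factorial := by
  have key : ∀ (g : Fin n → Fin n) (hg : g ∈ PS A),
      Function.Bijective (fun a : ↥A => (⟨g a, mem_PS_maps hg a.2⟩ : ↥A)) := by
    intro g hg
    rw [← Finite.injective_iff_bijective]
    intro a b hab
    have : g a = g b := congrArg Subtype.val hab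
    exact Subtype.ext ((mem_filter.mp hg).2.1 this)
  have : (PS A).card = (univ : Finset (Equiv.Perm ↥A)).card := by
    apply Finset.card_bij (fun g hg => Equiv.ofBijective _ (key g hg))
    · intro g hg; exact mem_univ _
    · intro g hg g' hg' h
      simp only [PS, ES, mem_filter, mem_univ, true_and] at hg hg'
      funext v
      by_cases hv : v ∈ A
      · have := congrFun (congrArg Equiv.toFun h) ⟨v, hv⟩
        simpa [Equiv.ofBijective] using congrArg Subtype.val this
      · rw [hg.1 v hv, hg'.1 v hv]
    · intro e _
      refine ⟨fun v => if h : v ∈ A then (e ⟨v, h⟩ : Fin n) else v, ?_, ?_⟩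
      · have hinj : Function.Injective
            (fun v : Fin n => if h : v ∈ A then (e ⟨v, h⟩ : Fin n) else v) := by
          intro a b hab
          simp only at hab
          by_cases ha : a ∈ A <;> by_cases hb : b ∈ A
          · rw [dif_pos ha, dif_pos hb] at hab
            have := e.injective (Subtype.ext hab)
            exact congrArg Subtype.val this
          · rw [dif_pos ha, dif_neg hb] at hab
            exact absurd (hab ▸ (e ⟨a, ha⟩).2) hb
          · rw [dif_neg ha, dif_pos hb] at hab
            exact absurd (hab ▸ (e ⟨b, hb⟩).2 : a ∈ A) ha
          · rwa [dif_neg ha, dif_neg hb] at hab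
        simp only [PS, ES, mem_filter, mem_univ, true_and]
        exact ⟨fun v hv => dif_neg hv, Finite.injective_iff_bijective.mp hinj⟩
      · ext a
        simp [Equiv.ofBijective, a.2]

  rw [this, Finset.card_univ, Fintype.card_perm, Fintype.card_coe]

lemma iterate_eq {g h : Fin n → Fin n} {v : Fin n}
    (H : ∀ j, g (h^[j] v) = h (h^[j] v)) : ∀ j, g^[j] v = h^[j] v := by
  intro j; induction j with
  | zero => rfl
  | succ j ih =>
    rw [Function.iterate_succ_apply', Function.iterate_succ_apply', ih, H j]

lemma partition (A : Finset (Fin n)) :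
    (ES A).card = ∑ A' ∈ A.powerset, (CS A A').card := by
  rw [Finset.card_eq_sum_card_fiberwise
    (f := fun g => (univ.filter (cyc g)) ∩ A) (t := A.powerset)
    (fun g _ => mem_powerset.mpr inter_subset_right)]
  refine Finset.sum_congr rfl fun A' hA' => ?_
  rw [mem_powerset] at hA'
  congr 1
  ext g
  simp only [CS, mem_filter, and_congr_right_iff]
  intro hg
  simp only [ES, mem_filter, mem_univ, true_and] at hg
  constructor
  · intro h v
    constructor
    · intro hc
      by_cases hv : v ∈ A
      · left; rw [← h]; simp [hc, hv]
      · right; exact hv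
    · intro hc
      rcases hc with hc | hc
      · have : v ∈ univ.filter (cyc g) ∩ A := h ▸ hc
        simp only [mem_inter, mem_filter] at this
        exact this.1.2
      · exact ⟨1, le_refl _, hg v hc⟩
  · intro h
    ext v
    simp only [mem_inter, mem_filter, mem_univ, true_and]
    constructor
    · rintro ⟨hc, hv⟩
      rcases (h v).mp hc with h1 | h1
      · exact h1
      · exact absurd hv h1
    · intro hv
      exact ⟨(h v).mpr (Or.inl hv), hA' hv⟩


noncomputable def sigOf (A' : Finset (Fin n)) (g : Fin n → Fin n) : Fin n → Fin n :=
  fun v => if v ∈ A' then g v else v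

noncomputable def resOf (A' : Finset (Fin n)) (g : Fin n → Fin n) : Fin n → Fin n :=
  fun v => if v ∈ A' then v else g v

lemma split {A A' : Finset (Fin n)} (hsub : A' ⊆ A) :
    (CS A A').card = (PS A').card * (CS (A \ A') ∅).card := by
  rw [← Finset.card_product]
  apply Finset.card_bij (fun g _ => (sigOf A' g, resOf A' g))
  · -- maps into PS A' ×ˢ CS (A\A') ∅
    intro g hg
    simp only [CS, ES, mem_filter, mem_univ, true_and] at hg
    obtain ⟨hfix, hcyc⟩ := hg
    rw [mem_product]
    constructor
    · -- sigOf ∈ PS A'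
      simp only [PS, ES, mem_filter, mem_univ, true_and]
      refine ⟨fun v hv => if_neg hv, ?_⟩
      rw [← Finite.surjective_iff_bijective]
      intro v
      by_cases hv : v ∈ A'
      · obtain ⟨w, hw, hgw⟩ := cyc_pre ((hcyc v).mpr (Or.inl hv))
        rcases (hcyc w).mp hw with h1 | h1
        · exact ⟨w, by simp [sigOf, h1, hgw]⟩
        · exact absurd (hgw ▸ hsub hv : (g w) ∈ A) (by rwa [hfix w h1])
      · exact ⟨v, if_neg hv⟩
    · -- resOf ∈ CS (A \ A') ∅
      have hres_fix : ∀ v ∉ A \ A', resOf A' g v = v := by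
        intro v hv
        rw [mem_sdiff, not_and_or, not_not] at hv
        rcases hv with hv | hv
        · by_cases h : v ∈ A'
          · exact absurd (hsub h) hv
          · simp [resOf, h, hfix v hv]
        · simp [resOf, hv]
      simp only [CS, ES, mem_filter, mem_univ, true_and]
      refine ⟨hres_fix, fun v => ?_⟩
      simp only [notMem_empty, false_or]
      constructor
      · intro hc
        by_contra hv
        obtain ⟨k, hk1, hk⟩ := hc
        set h := resOf A' g with hh
        -- D = A' ∪ Aᶜ is pointwise fixed by h
        have hD : ∀ d ∈ A' ∪ Aᶜ, h d ∈ A' ∪ Aᶜ := by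
          intro d hd
          rw [mem_union, mem_compl] at hd
          have : h d = d := by
            rcases hd with hd | hd
            · simp [hh, resOf, hd]
            · simp [hh, resOf, hfix d hd, fun hdA' => hd (hsub hdA')]
          rw [this, mem_union, mem_compl]
          exact hd
        have hvD : v ∉ A' ∪ Aᶜ := by
          rw [mem_sdiff] at hv
          simp [mem_union, mem_compl, hv.1, hv.2]
        have havoid := orbit_avoid hD hk1 hk hvD
        have hiter : ∀ j, g^[j] v = h^[j] v := by
          apply iterate_eq
          intro j
          have := havoid j
          rw [mem_union, not_or, mem_compl, not_not] at this
          show g (h^[j] v) = (if h^[j] v ∈ A' then h^[j] v else g (h^[j] v))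
          rw [if_neg this.1]
        have : cyc g v := ⟨k, hk1, by rw [hiter k]; exact hk⟩
        rcases (hcyc v).mp this with h1 | h1
        · exact (mem_sdiff.mp hv).2 h1
        · exact h1 (mem_sdiff.mp hv).1
      · intro hv
        exact cyc_of_fixed (hres_fix v hv)
  · -- injective
    intro g hg g' hg' h
    rw [Prod.mk.injEq] at h
    funext v
    by_cases hv : v ∈ A'
    · have := congrFun h.1 v
      simpa [sigOf, hv] using this
    · have := congrFun h.2 v
      simpa [resOf, hv] using this
  · -- surjective
    rintro ⟨σ, h⟩ hmem
    rw [mem_product] at hmem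
    obtain ⟨hσ, hhm⟩ := hmem
    have hσfix : ∀ v ∉ A', σ v = v := by
      simp only [PS, ES, mem_filter, mem_univ, true_and] at hσ
      exact hσ.1
    have hσbij : Function.Bijective σ := by
      simp only [PS, ES, mem_filter, mem_univ, true_and] at hσ
      exact hσ.2
    have hσmaps : ∀ v ∈ A', σ v ∈ A' := fun v hv => mem_PS_maps hσ hv
    simp only [CS, ES, mem_filter, mem_univ, true_and] at hhm
    obtain ⟨hhfix, hhcyc⟩ := hhm
    refine ⟨fun v => if v ∈ A' then σ v else h v, ?_, ?_⟩
    · -- membership in CS A A'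
      set g := fun v => if v ∈ A' then σ v else h v with hg
      have hgfix : ∀ v ∉ A, g v = v := by
        intro v hv
        have hv' : v ∉ A' := fun h' => hv (hsub h')
        have : v ∉ A \ A' := fun h' => hv (mem_sdiff.mp h').1
        simp [hg, hv', hhfix v this]
      simp only [CS, ES, mem_filter, mem_univ, true_and]
      refine ⟨hgfix, fun v => ?_⟩
      have hD : ∀ d ∈ A' ∪ Aᶜ, g d ∈ A' ∪ Aᶜ := by
        intro d hd
        rw [mem_union, mem_compl] at hd
        rcases hd with hd | hd
        · simp only [hg, if_pos hd]
          exact mem_union_left _ (hσmaps d hd)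
        · rw [hgfix d hd]
          exact mem_union_right _ (mem_compl.mpr hd)
      constructor
      · intro hc
        by_cases hvA : v ∈ A
        · by_cases hv' : v ∈ A'
          · exact Or.inl hv'
          · exfalso
            obtain ⟨k, hk1, hk⟩ := hc
            have hvD : v ∉ A' ∪ Aᶜ := by simp [mem_union, mem_compl, hv', hvA]
            have havoid := orbit_avoid hD hk1 hk hvD
            have hiter : ∀ j, h^[j] v = g^[j] v := by
              apply iterate_eq
              intro j
              have := havoid j
              rw [mem_union, not_or, mem_compl, not_not] at this
              show h (g^[j] v) = (if g^[j] v ∈ A' then σ (g^[j] v) else h (g^[j] v))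
              rw [if_neg this.1]
            have : cyc h v := ⟨k, hk1, by rw [hiter k]; exact hk⟩
            rcases (hhcyc v).mp this with h1 | h1
            · exact notMem_empty v h1
            · exact h1 (mem_sdiff.mpr ⟨hvA, hv'⟩)
        · exact Or.inr hvA
      · intro hc
        rcases hc with hv' | hvA
        · -- v ∈ A' : orbit under g equals σ orbit which is cyclic
          have horb : ∀ j, σ^[j] v ∈ A' := iterate_mem_of_mem hσmaps hv'
          have hiter : ∀ j, g^[j] v = σ^[j] v := by
            apply iterate_eq
            intro j
            simp [hg, if_pos (horb j)]
          obtain ⟨k, hk1, hk⟩ := cyc_of_injective hσbij.injective v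
          exact ⟨k, hk1, by rw [hiter k]; exact hk⟩
        · exact cyc_of_fixed (hgfix v hvA)
    · -- pair map recovers (σ, h)
      rw [Prod.mk.injEq]
      constructor
      · funext v
        by_cases hv : v ∈ A'
        · simp [sigOf, hv]
        · simp [sigOf, hv, hσfix v hv]
      · funext v
        by_cases hv : v ∈ A'
        · have h2 : v ∉ A \ A' := fun h' => (mem_sdiff.mp h').2 hv
          simp [resOf, hv, hhfix v h2]
        · simp [resOf, hv]

noncomputable def creal (n m : ℕ) : ℝ :=
  if m = 0 then 1 else ((n : ℝ) - (m : ℝ)) * (n : ℝ) ^ (m - 1)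

lemma key_identity {n m : ℕ} (_hm : m ≤ n) :
    ∑ j ∈ Finset.range (m+1),
      (m.choose j : ℝ) * (j.factorial : ℝ) * creal n (m - j) = (n:ℝ)^m := by
  have hrefl := Finset.sum_range_reflect
    (fun j => (m.choose j : ℝ) * (j.factorial : ℝ) * creal n (m - j)) (m+1)
  rw [← hrefl]
  simp only [Nat.add_sub_cancel]
  set u : ℕ → ℝ := fun i => (m.factorial : ℝ) / (i.factorial : ℝ) * (n:ℝ)^i with hu
  have hF0 : (m.choose (m - 0) : ℝ) * ((m - 0).factorial : ℝ) * creal n (m - (m - 0)) = u 0 := by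
    simp [creal, hu, Nat.choose_self]
  have hFs : ∀ i, i < m →
      (m.choose (m - (i+1)) : ℝ) * ((m - (i+1)).factorial : ℝ) * creal n (m - (m - (i+1)))
      = u (i+1) - u i := by
    intro i hi
    have h2 : m - (m - (i+1)) = i + 1 := by omega
    have h3 : i + 1 ≤ m := hi
    have hchoose : m.choose (m - (i+1)) = m.choose (i+1) := Nat.choose_symm h3
    have hnatR : (m.factorial : ℝ)
        = (m.choose (i+1) : ℝ) * ((i+1).factorial : ℝ) * ((m - (i+1)).factorial : ℝ) := by
      exact_mod_cast congrArg (Nat.cast (R := ℝ))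
        (Nat.choose_mul_factorial_mul_factorial h3).symm
    have hcval : creal n (i+1) = ((n:ℝ) - ((i:ℝ)+1)) * (n:ℝ)^i := by
      simp [creal]
    rw [h2, hchoose, hcval]
    simp only [hu]
    rw [hnatR]
    have hfs : ((i+1).factorial : ℝ) = ((i:ℝ)+1) * (i.factorial : ℝ) := by
      rw [Nat.factorial_succ]; push_cast; ring
    rw [hfs]
    have hne1 : (i.factorial : ℝ) ≠ 0 := by exact_mod_cast i.factorial_ne_zero
    have hne2 : ((i:ℝ)+1) ≠ 0 := by positivity
    field_simp
    ring
  rw [Finset.sum_range_succ']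
  rw [Finset.sum_congr rfl (fun i hi => hFs i (Finset.mem_range.mp hi)), hF0,
    Finset.sum_range_sub u m]
  have : u m = (n:ℝ)^m := by
    simp [hu, div_self (show (m.factorial:ℝ) ≠ 0 by exact_mod_cast m.factorial_ne_zero)]
  rw [← this]; ring

lemma forest_card (A : Finset (Fin n)) : ((CS A ∅).card : ℝ) = creal n A.card := by
  suffices H : ∀ m (A : Finset (Fin n)), A.card = m → ((CS A ∅).card : ℝ) = creal n A.card by
    exact H _ A rfl
  intro m
  induction m using Nat.strong_induction_on with
  | _ m ih =>
    intro A hA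
    have hAn : A.card ≤ n := by
      have := card_le_card (subset_univ A); simpa using this
    have e1 : ((n:ℝ))^A.card
        = ∑ A' ∈ A.powerset, (A'.card.factorial : ℝ) * ((CS (A \ A') ∅).card : ℝ) := by
      calc ((n:ℝ))^A.card = ((∑ A' ∈ A.powerset, (CS A A').card : ℕ) : ℝ) := by
            rw [← partition, card_ES]; push_cast; ring
        _ = _ := by
            push_cast
            refine Finset.sum_congr rfl fun A' hA' => ?_
            rw [split (mem_powerset.mp hA'), card_PS]; push_cast; ring
    have e2 : ((n:ℝ))^A.card
        = ∑ A' ∈ A.powerset, (A'.card.factorial : ℝ) * creal n (A.card - A'.card) := by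
      rw [Finset.sum_powerset_apply_card
        (fun j => (j.factorial : ℝ) * creal n (A.card - j))]
      rw [← key_identity hAn]
      refine (Finset.sum_congr rfl fun j _ => ?_).symm
      rw [nsmul_eq_mul]; ring
    have h0 : ∅ ∈ A.powerset := empty_mem_powerset A
    rw [← Finset.add_sum_erase _ _ h0] at e1 e2
    simp only [card_empty, Nat.factorial_zero, Nat.cast_one, one_mul, sdiff_empty,
      Nat.sub_zero] at e1 e2
    have hsum : ∑ A' ∈ A.powerset.erase ∅, (A'.card.factorial : ℝ) * ((CS (A \ A') ∅).card : ℝ)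
        = ∑ A' ∈ A.powerset.erase ∅, (A'.card.factorial : ℝ) * creal n (A.card - A'.card) := by
      refine Finset.sum_congr rfl fun A' hA' => ?_
      have hne : A' ≠ ∅ := (Finset.mem_erase.mp hA').1
      have hsub : A' ⊆ A := mem_powerset.mp (Finset.mem_erase.mp hA').2
      have hcard : (A \ A').card = A.card - A'.card := card_sdiff_of_subset hsub
      have hpos : 1 ≤ A'.card := Finset.card_pos.mpr (Finset.nonempty_iff_ne_empty.mpr hne)
      have hle : A'.card ≤ A.card := card_le_card hsub
      have hlt : (A \ A').card < m := by omega
      rw [ih _ hlt (A \ A') rfl, hcard]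
    rw [hsum] at e1
    rw [hA] at e1 e2 ⊢
    linarith

lemma final_count (N : ℕ) :
    (Nat.card {f : Fin n → Fin n //
        Nat.card {v : Fin n // ∃ k, 1 ≤ k ∧ f^[k] v = v} = N} : ℝ)
      = (n.choose N : ℝ) * (N.factorial : ℝ) * creal n (n - N) := by
  have hinner : ∀ f : Fin n → Fin n,
      Nat.card {v : Fin n // ∃ k, 1 ≤ k ∧ f^[k] v = v} = (univ.filter (cyc f)).card := by
    intro f
    rw [Nat.card_eq_fintype_card]
    convert Fintype.card_subtype (p := cyc f) using 2
    rfl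
  have houter : (Nat.card {f : Fin n → Fin n //
        Nat.card {v : Fin n // ∃ k, 1 ≤ k ∧ f^[k] v = v} = N})
      = (univ.filter (fun f : Fin n → Fin n => (univ.filter (cyc f)).card = N)).card := by
    rw [Nat.card_eq_fintype_card]
    rw [Fintype.card_subtype]
    congr 1
    apply Finset.filter_congr
    intro f _
    rw [hinner f]
  rw [houter]
  have hpart : (univ.filter (fun f : Fin n → Fin n => (univ.filter (cyc f)).card = N)).card
      = ∑ S ∈ Finset.powersetCard N (univ : Finset (Fin n)), (CS univ S).card := by
    rw [Finset.card_eq_sum_card_fiberwise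
      (f := fun g => univ.filter (cyc g)) (t := Finset.powersetCard N univ)
      (fun g hg => Finset.mem_powersetCard.mpr ⟨subset_univ _, (mem_filter.mp hg).2⟩)]
    refine Finset.sum_congr rfl fun S hS => ?_
    have hScard : S.card = N := (Finset.mem_powersetCard.mp hS).2
    congr 1
    ext g
    simp only [CS, ES, mem_filter, mem_univ, true_and]
    constructor
    · rintro ⟨hcard, hfil⟩
      refine ⟨fun v hv => absurd trivial hv, fun v => ?_⟩
      simp only [mem_univ, not_true, or_false]
      rw [← hfil]; simp
    · rintro ⟨_, hcyc⟩
      have hfil : univ.filter (cyc g) = S := by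
        ext v
        simp only [mem_filter, mem_univ, true_and]
        rw [hcyc v]
        simp
      exact ⟨by rw [hfil, hScard], hfil⟩
  rw [hpart]
  have hterm : ∀ S ∈ Finset.powersetCard N (univ : Finset (Fin n)),
      ((CS univ S).card : ℝ) = (N.factorial : ℝ) * creal n (n - N) := by
    intro S hS
    have hScard : S.card = N := (Finset.mem_powersetCard.mp hS).2
    have hsub : S ⊆ univ := subset_univ S
    have hcard : (univ \ S).card = n - N := by
      rw [card_sdiff_of_subset hsub, Finset.card_univ, Fintype.card_fin, hScard]
    rw [split hsub, card_PS]
    push_cast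
    rw [forest_card, hcard, hScard]
  push_cast
  rw [Finset.sum_congr rfl hterm, Finset.sum_const, Finset.card_powersetCard,
    Finset.card_univ, Fintype.card_fin, nsmul_eq_mul]
  ring

end RandMap

/-- For a uniformly random mapping `f` of an `n`-element set, the number of cyclic
vertices equals `N` with probability `N(n−1)!/(n^N (n−N)!)`, for `1 ≤ N ≤ n`. -/
theorem stmt_5 (n N : ℕ) (hN : 1 ≤ N) (hNn : N ≤ n) :
    (Nat.card {f : Fin n → Fin n //
        Nat.card {v : Fin n // ∃ k, 1 ≤ k ∧ f^[k] v = v} = N} : ℝ) / (n : ℝ) ^ n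
      = (N : ℝ) * (Nat.factorial (n-1) : ℝ) / ((n : ℝ) ^ N * (Nat.factorial (n-N) : ℝ)) := by
  have hn : 1 ≤ n := le_trans hN hNn
  have hn0 : (n : ℝ) ≠ 0 := Nat.cast_ne_zero.mpr (by omega)
  rw [RandMap.final_count]
  rcases eq_or_lt_of_le hNn with heq | hlt
  · subst heq
    simp only [Nat.sub_self, Nat.choose_self, Nat.cast_one, one_mul, RandMap.creal, if_pos rfl, ↓reduceIte,
      mul_one, Nat.factorial_zero]
    have hfact : (N:ℝ) * ((N-1).factorial : ℝ) = (N.factorial : ℝ) := by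
      exact_mod_cast congrArg (Nat.cast (R := ℝ)) (Nat.mul_factorial_pred (by omega))
    rw [← hfact]
  · have hcreal : RandMap.creal n (n - N) = (N:ℝ) * (n:ℝ)^(n-N-1) := by
      rw [RandMap.creal, if_neg (by omega)]
      push_cast [Nat.cast_sub hNn]
      ring
    rw [hcreal]
    have hC : (n.choose N : ℝ) * (N.factorial : ℝ) * ((n-N).factorial : ℝ)
        = (n:ℝ) * (((n-1).factorial : ℕ) : ℝ) := by
      have h1 := Nat.choose_mul_factorial_mul_factorial hNn
      have h2 := Nat.mul_factorial_pred (show n ≠ 0 by omega)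
      exact_mod_cast congrArg (Nat.cast (R := ℝ)) (h1.trans h2.symm)
    have hpow : (n:ℝ)^n = (n:ℝ)^(n-N-1) * (n:ℝ)^N * n := by
      rw [← pow_add, ← pow_succ]; congr 1; omega
    have hfne : ((n-N).factorial : ℝ) ≠ 0 := by
      exact_mod_cast Nat.factorial_ne_zero _
    field_simp
    rw [hpow]
    linear_combination ((n:ℝ)^(n-N-1) * (n:ℝ)^N) * hC
end

section
/- For a random mapping of n elements, as n → ∞, uniformly for N with n^{1/5} < N < 4√(n ln n), the probability that the number of cyclic vertices equals N is (1+o(1))·(N/n)·e^{-N²/(2n)}. -/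
set_option linter.unusedSectionVars false
set_option maxHeartbeats 2000000
open Function Finset

namespace Stmt7

variable {α : Type*} [Fintype α] [DecidableEq α]

/-- cyclic point -/
def IsCyc (f : α → α) (v : α) : Prop := ∃ k, 1 ≤ k ∧ f^[k] v = v

lemma isCyc_apply {f : α → α} {v : α} (h : IsCyc f v) : IsCyc f (f v) := by
  obtain ⟨k, hk, hv⟩ := h
  exact ⟨k, hk, by rw [← Function.iterate_succ_apply, Function.iterate_succ_apply', hv]⟩

lemma injOn_cyc (f : α → α) : Set.InjOn f {v | IsCyc f v} := by
  rintro u ⟨k, hk, hu⟩ v ⟨l, hl, hv⟩ huv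
  have hu' : f^[k * l] u = u := by
    rw [Function.iterate_mul]; exact Function.iterate_fixed hu l
  have hv' : f^[k * l] v = v := by
    rw [mul_comm, Function.iterate_mul]; exact Function.iterate_fixed hv k
  have hkl : 1 ≤ k * l := Nat.one_le_iff_ne_zero.2 (by positivity)
  have : f^[k * l - 1] (f u) = f^[k * l - 1] (f v) := by rw [huv]
  rw [← Function.iterate_succ_apply, ← Function.iterate_succ_apply,
    show (k * l - 1).succ = k * l by omega] at this
  rwa [hu', hv'] at this

/-- every orbit reaches a cyclic point -/
lemma exists_iterate_isCyc (f : α → α) (v : α) : ∃ k, IsCyc f (f^[k] v) := by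
  have : ¬ Function.Injective (fun i : Fin (Fintype.card α + 1) => f^[(i : ℕ)] v) := by
    intro hinj
    have := Fintype.card_le_of_injective _ hinj
    simp at this
  rw [Function.not_injective_iff] at this
  obtain ⟨i, j, hij, hne⟩ := this
  rcases Nat.lt_or_ge (i : ℕ) (j : ℕ) with h | h
  · exact ⟨i, ⟨(j : ℕ) - i, by omega, by
      rw [← Function.iterate_add_apply, Nat.sub_add_cancel h.le, hij]⟩⟩
  · have hji : (j : ℕ) < i := by
      rcases Nat.lt_or_ge (j : ℕ) (i : ℕ) with h' | h'
      · exact h'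
      · exact (hne (Fin.ext (le_antisymm h' h))).elim
    exact ⟨j, ⟨(i : ℕ) - j, by omega, by
      rw [← Function.iterate_add_apply, Nat.sub_add_cancel hji.le, ← hij]⟩⟩

/-- points of an invariant injective set are cyclic -/
lemma isCyc_of_mapsTo {f : α → α} {S : Finset α} (hm : ∀ v ∈ S, f v ∈ S)
    (hinj : Set.InjOn f S) {v : α} (hv : v ∈ S) : IsCyc f v := by
  classical
  -- the restriction of f to S is a bijection of S
  have hiter : ∀ k, ∀ w ∈ S, f^[k] w ∈ S := by
    intro k
    induction k with
    | zero => simp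
    | succ k ih => intro w hw; rw [Function.iterate_succ_apply]; exact ih _ (hm w hw)
  -- surjectivity of (f on S)
  have hsurj : ∀ w ∈ S, ∃ u ∈ S, f u = w := by
    have himg : Finset.image f S = S := by
      apply Finset.eq_of_subset_of_card_le
      · intro x hx; obtain ⟨u, hu, rfl⟩ := Finset.mem_image.1 hx; exact hm u hu
      · rw [Finset.card_image_of_injOn hinj]
    intro w hw
    rw [← himg] at hw
    obtain ⟨u, hu, huw⟩ := Finset.mem_image.1 hw
    exact ⟨u, hu, huw⟩
  -- v is in the image of f^[k] on S for all k; pigeonhole on iterates of v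
  obtain ⟨k, hk⟩ := exists_iterate_isCyc f v
  obtain ⟨l, hl, hfix⟩ := hk
  -- f^[k] v ∈ S and is cyclic; walk back: v is cyclic too?
  -- direct: v = f^[k*l? ] ... use: f^[l] (f^[k] v) = f^[k] v ⇒ f^[k] (f^[l] v) = f^[k] v
  have h1 : f^[k] (f^[l] v) = f^[k] v := by
    rw [← Function.iterate_add_apply, Nat.add_comm, Function.iterate_add_apply, hfix]
  -- injectivity of f^[k] on S
  have hinjk : ∀ k, Set.InjOn (f^[k]) S := by
    intro k
    induction k with
    | zero => simp [Set.injOn_id]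
    | succ k ih =>
      intro a ha b hb hab
      rw [Function.iterate_succ_apply, Function.iterate_succ_apply] at hab
      exact hinj ha hb (ih (hm a ha) (hm b hb) hab)
  have hvS : f^[l] v ∈ S := hiter l v hv
  have := hinjk k hvS hv h1
  exact ⟨l, hl, this⟩




/-- reach where only values off S matter -/
lemma reach_congr {f g : α → α} {S : Finset α} (h : ∀ v ∉ S, f v = g v)
    {v : α} (hv : ∃ k, f^[k] v ∈ S) : ∃ k, g^[k] v ∈ S := by
  classical
  obtain ⟨k, hk⟩ := hv
  -- take minimal k
  have hex : ∃ k, f^[k] v ∈ S := ⟨k, hk⟩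
  set K := Nat.find hex with hK
  have hKS : f^[K] v ∈ S := Nat.find_spec hex
  have hmin : ∀ i < K, f^[i] v ∉ S := fun i hi => Nat.find_min hex hi
  refine ⟨K, ?_⟩
  have : ∀ i ≤ K, g^[i] v = f^[i] v := by
    intro i hi
    induction i with
    | zero => rfl
    | succ i ih =>
      rw [Function.iterate_succ_apply', Function.iterate_succ_apply',
        ih (by omega), ← h _ (hmin i (by omega))]
  rw [this K le_rfl]; exact hKS

lemma cyc_subset_of_reach {f : α → α} {S : Finset α} (hm : ∀ v ∈ S, f v ∈ S)
    (hr : ∀ v, ∃ k, f^[k] v ∈ S) {v : α} (hv : IsCyc f v) : v ∈ S := by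
  obtain ⟨p, hp, hfix⟩ := hv
  obtain ⟨k, hk⟩ := hr v
  have hiter : ∀ j, ∀ w ∈ S, f^[j] w ∈ S := by
    intro j
    induction j with
    | zero => simp
    | succ j ih => intro w hw; rw [Function.iterate_succ_apply]; exact ih _ (hm w hw)
  -- v = f^[p*k... ] choose m with p*m ≥ k
  have h1 : f^[p * (k + 1)] v = v := by
    rw [Function.iterate_mul]; exact Function.iterate_fixed hfix _
  have h2 : p * (k + 1) = (p * (k+1) - k) + k := by have : k + 1 ≤ p * (k+1) := Nat.le_mul_of_pos_left _ hp; omega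
  have : f^[p * (k+1) - k] (f^[k] v) ∈ S := hiter _ _ hk
  rw [← Function.iterate_add_apply, ← h2, h1] at this
  exact this




lemma isCyc_iff_bounded (f : α → α) (v : α) :
    IsCyc f v ↔ ∃ k, 1 ≤ k ∧ k ≤ Fintype.card α ∧ f^[k] v = v := by
  constructor
  · rintro ⟨k, hk, hfix⟩
    have hex : ∃ j, 1 ≤ j ∧ f^[j] v = v := ⟨k, hk, hfix⟩
    classical
    set d := Nat.find hex with hd
    obtain ⟨hd1, hdfix⟩ := Nat.find_spec hex
    refine ⟨d, hd1, ?_, hdfix⟩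
    by_contra hlt
    push_neg at hlt
    -- the points f^[i] v, i < d, are distinct
    have key : ∀ i j : Fin d, (i:ℕ) < (j:ℕ) → f^[(i:ℕ)] v = f^[(j:ℕ)] v → False := by
      intro i j hlt2 hij
      have h1 : f^[d - (j:ℕ)] (f^[(j:ℕ)] v) = v := by
        rw [← Function.iterate_add_apply, Nat.sub_add_cancel j.2.le, hdfix]
      have h2 : f^[d - (j:ℕ) + (i:ℕ)] v = v := by
        rw [Function.iterate_add_apply, hij]
        exact h1
      have := Nat.find_min hex (m := d - (j:ℕ) + (i:ℕ)) (by have := j.2; omega)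
      exact this ⟨by have := j.2; omega, h2⟩
    have hinj : Function.Injective (fun i : Fin d => f^[(i:ℕ)] v) := by
      intro i j hij
      simp only at hij
      rcases Nat.lt_trichotomy (i:ℕ) (j:ℕ) with h | h | h
      · exact (key i j h hij).elim
      · exact Fin.ext h
      · exact (key j i h hij.symm).elim
    have := Fintype.card_le_of_injective _ hinj
    simp only [Fintype.card_fin] at this
    omega
  · rintro ⟨k, h1, _, h3⟩; exact ⟨k, h1, h3⟩

lemma isCyc_iff_bounded' (f : α → α) (v : α) :
    IsCyc f v ↔ ∃ k ∈ Finset.Icc 1 (Fintype.card α), f^[k] v = v := by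
  rw [isCyc_iff_bounded]
  constructor
  · rintro ⟨k, h1, h2, h3⟩; exact ⟨k, Finset.mem_Icc.2 ⟨h1, h2⟩, h3⟩
  · rintro ⟨k, hk, h3⟩; have := Finset.mem_Icc.1 hk; exact ⟨k, this.1, this.2, h3⟩

instance (f : α → α) : DecidablePred (IsCyc f) := fun v =>
  decidable_of_iff _ (isCyc_iff_bounded' f v).symm

def cycSet (f : α → α) : Finset α := univ.filter (fun v => IsCyc f v)

lemma mem_cycSet {f : α → α} {v : α} : v ∈ cycSet f ↔ IsCyc f v := by
  simp [cycSet]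


def glue (S : Finset α) (a : {x // x ∈ S} → α) (b : {x // x ∉ S} → α) : α → α :=
  fun v => if h : v ∈ S then a ⟨v, h⟩ else b ⟨v, h⟩

def glueId (S : Finset α) (b : {x // x ∉ S} → α) : α → α :=
  glue S (fun v => (v : α)) b

def Good (S : Finset α) (g : {x // x ∉ S} → α) : Prop :=
  ∀ v, ∃ k, (glueId S g)^[k] v ∈ S

lemma glue_mem {S : Finset α} {a b} {v : α} (h : v ∈ S) : glue S a b v = a ⟨v, h⟩ :=
  dif_pos h

lemma glue_not_mem {S : Finset α} {a b} {v : α} (h : v ∉ S) : glue S a b v = b ⟨v, h⟩ :=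
  dif_neg h

lemma cycSet_eq_iff {f : α → α} {S : Finset α} :
    cycSet f = S ↔ ∀ v, IsCyc f v ↔ v ∈ S := by
  constructor
  · intro h v; rw [← h, mem_cycSet]
  · intro h; ext v; rw [mem_cycSet]; exact h v

/-- restriction of f to an invariant injective set, as a permutation -/
noncomputable def permOf (f : α → α) (S : Finset α) (hm : ∀ v ∈ S, f v ∈ S) (hinj : Set.InjOn f S) :
    Equiv.Perm {x // x ∈ S} :=
  Equiv.ofBijective (fun v => ⟨f v, hm v v.2⟩)
    (Finite.injective_iff_bijective.1
      (fun a b hab => Subtype.ext (hinj a.2 b.2 (congrArg Subtype.val hab))))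

lemma permOf_apply (f : α → α) (S : Finset α) (hm) (hinj) (v : {x // x ∈ S}) :
    (permOf f S hm hinj v : α) = f v := rfl

section E1
variable (S : Finset α)

lemma cyc_mapsTo {f : α → α} (hf : cycSet f = S) : ∀ v ∈ S, f v ∈ S := by
  intro v hv
  rw [← hf, mem_cycSet] at hv ⊢
  exact isCyc_apply hv

lemma cyc_injOn {f : α → α} (hf : cycSet f = S) : Set.InjOn f S := by
  intro a ha b hb hab
  rw [← hf] at ha hb
  exact injOn_cyc f (mem_cycSet.1 ha) (mem_cycSet.1 hb) hab

lemma good_of_cycSet {f : α → α} (hf : cycSet f = S) :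
    Good S (fun v : {x // x ∉ S} => f v) := by
  intro v
  obtain ⟨k, hk⟩ := exists_iterate_isCyc f v
  have hkS : f^[k] v ∈ S := by rw [← hf, mem_cycSet]; exact hk
  exact reach_congr (f := f) (fun w hw => by rw [glueId, glue_not_mem hw]) ⟨k, hkS⟩

lemma cycSet_glue (σ : Equiv.Perm {x // x ∈ S}) (g : {x // x ∉ S} → α) (hg : Good S g) :
    cycSet (glue S (fun v => (σ v : α)) g) = S := by
  set f := glue S (fun v => (σ v : α)) g with hfdef
  have hm : ∀ v ∈ S, f v ∈ S := by
    intro v hv; rw [hfdef, glue_mem hv]; exact (σ ⟨v, hv⟩).2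
  apply Finset.Subset.antisymm
  · -- cyc ⊆ S via reach
    intro v hv
    rw [mem_cycSet] at hv
    have hreach : ∀ w, ∃ k, f^[k] w ∈ S := by
      intro w
      exact reach_congr (f := glueId S g)
        (fun u hu => by rw [glueId, glue_not_mem hu, hfdef, glue_not_mem hu]) (hg w)
    exact cyc_subset_of_reach hm hreach hv
  · -- S ⊆ cyc
    intro v hv
    rw [mem_cycSet]
    refine isCyc_of_mapsTo hm ?_ hv
    intro a ha b hb hab
    rw [hfdef, glue_mem ha, glue_mem hb] at hab
    have := σ.injective (Subtype.ext hab)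
    exact congrArg Subtype.val this

noncomputable def E1 : {f : α → α // cycSet f = S} ≃
    Equiv.Perm {x // x ∈ S} × {g : {x // x ∉ S} → α // Good S g} where
  toFun f := ⟨permOf f.1 S (cyc_mapsTo S f.2) (cyc_injOn S f.2),
    fun v => f.1 v, good_of_cycSet S f.2⟩
  invFun p := ⟨glue S (fun v => (p.1 v : α)) p.2.1, cycSet_glue S p.1 p.2.1 p.2.2⟩
  left_inv f := by
    apply Subtype.ext
    funext v
    show glue S (fun v => ((permOf f.1 S (cyc_mapsTo S f.2) (cyc_injOn S f.2)) v : α))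
      (fun v => f.1 v) v = f.1 v
    by_cases h : v ∈ S
    · rw [glue_mem h]; rfl
    · rw [glue_not_mem h]
  right_inv p := by
    obtain ⟨σ, g, hg⟩ := p
    apply Prod.ext
    · apply Equiv.ext
      intro v
      apply Subtype.ext
      show (glue S (fun v => (σ v : α)) g) v = _
      rw [glue_mem v.2]
    · apply Subtype.ext
      funext v
      show (glue S (fun v => (σ v : α)) g) v = _
      rw [glue_not_mem v.2]
end E1

noncomputable def Fc (S : Finset α) : ℕ := Nat.card {g : {x // x ∉ S} → α // Good S g}

lemma nat_card_perm (S : Finset α) : Nat.card (Equiv.Perm {x // x ∈ S}) = Nat.factorial S.card := by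
  rw [Nat.card_eq_fintype_card, Fintype.card_perm, Fintype.card_coe]

lemma card_cycSet_eq (S : Finset α) :
    Nat.card {f : α → α // cycSet f = S} = Nat.factorial S.card * Fc S := by
  rw [Nat.card_congr (E1 S), Nat.card_prod, nat_card_perm, Fc]

def prodSubtypeFst {A B : Type*} (q : A → Prop) : {x : A × B // q x.1} ≃ {a // q a} × B where
  toFun x := (⟨x.1.1, x.2⟩, x.1.2)
  invFun y := ⟨(y.1.1, y.2), y.1.2⟩
  left_inv x := rfl
  right_inv y := rfl

def E2a (S : Finset α) (P : (α → α) → Prop) :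
    {g : {x // x ∉ S} → α // P (glueId S g)} ≃ {f : α → α // P f ∧ ∀ v ∈ S, f v = v} where
  toFun g := ⟨glueId S g.1, g.2, fun v h => glue_mem h⟩
  invFun f := ⟨fun v => f.1 v, by
      have h : glueId S (fun v : {x // x ∉ S} => f.1 v) = f.1 := by
        funext v
        by_cases h : v ∈ S
        · rw [glueId, glue_mem h]; exact (f.2.2 v h).symm
        · rw [glueId, glue_not_mem h]
      rw [h]; exact f.2.1⟩
  left_inv g := by
    apply Subtype.ext
    funext v
    show glueId S (↑g) ↑v = g.1 v
    rw [glueId, glue_not_mem v.2]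
  right_inv f := by
    apply Subtype.ext
    funext v
    show glueId S (fun v : {x // x ∉ S} => f.1 v) v = f.1 v
    by_cases h : v ∈ S
    · rw [glueId, glue_mem h]; exact (f.2.2 v h).symm
    · rw [glueId, glue_not_mem h]

noncomputable def permFixEquiv (S U : Finset α) (hSU : S ⊆ U) :
    {σ : Equiv.Perm {x // x ∈ U} // ∀ v (h : v ∈ S), ((σ ⟨v, hSU h⟩ : {x // x ∈ U}) : α) = v}
      ≃ Equiv.Perm {x // x ∈ U \ S} := by
  refine (Equiv.subtypeEquivRight ?_).trans
    ((Equiv.Perm.subtypeEquivSubtypePerm (fun x : {x // x ∈ U} => (x : α) ∉ S)).symm.trans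
      (Equiv.permCongr ?_))
  · intro σ
    constructor
    · intro h a ha
      rw [not_not] at ha
      have := h a ha
      apply Subtype.ext
      rw [this]
    · intro h v hv
      have := h ⟨v, hSU hv⟩ (by simp [hv])
      rw [this]
  · exact (Equiv.subtypeSubtypeEquivSubtypeInter _ _).trans
      (Equiv.subtypeEquivRight (fun x => (Finset.mem_sdiff).symm))

lemma card_fiber (S U : Finset α) (hSU : S ⊆ U) :
    Nat.card {g : {x // x ∉ S} → α // cycSet (glueId S g) = U} = Nat.factorial (U \ S).card * Fc U := by
  have e1 : {g : {x // x ∉ S} → α // cycSet (glueId S g) = U}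
      ≃ {f : α → α // cycSet f = U ∧ ∀ v ∈ S, f v = v} := E2a S (fun f => cycSet f = U)
  have e2 : {f : α → α // cycSet f = U ∧ ∀ v ∈ S, f v = v}
      ≃ {x : {f : α → α // cycSet f = U} // ∀ v ∈ S, x.1 v = v} :=
    (Equiv.subtypeSubtypeEquivSubtypeInter (fun f : α → α => cycSet f = U)
      (fun f => ∀ v ∈ S, f v = v)).symm
  have e3 : {x : {f : α → α // cycSet f = U} // ∀ v ∈ S, x.1 v = v}
      ≃ {y : Equiv.Perm {x // x ∈ U} × {g : {x // x ∉ U} → α // Good U g} //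
          ∀ v (h : v ∈ S), ((y.1 ⟨v, hSU h⟩ : {x // x ∈ U}) : α) = v} := by
    refine (E1 U).subtypeEquiv (fun f => ?_)
    exact Iff.rfl
  have e4 := prodSubtypeFst (B := {g : {x // x ∉ U} → α // Good U g})
    (fun σ : Equiv.Perm {x // x ∈ U} => ∀ v (h : v ∈ S), ((σ ⟨v, hSU h⟩ : {x // x ∈ U}) : α) = v)
  rw [Nat.card_congr (((e1.trans e2).trans e3).trans e4), Nat.card_prod,
    Nat.card_congr (permFixEquiv S U hSU), nat_card_perm, Fc]

lemma card_fiber_zero (S U : Finset α) (h : ¬ S ⊆ U) :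
    Nat.card {g : {x // x ∉ S} → α // cycSet (glueId S g) = U} = 0 := by
  rw [Nat.card_eq_zero]
  left
  constructor
  rintro ⟨g, hg⟩
  apply h
  intro v hv
  rw [← hg, mem_cycSet]
  refine ⟨1, le_rfl, ?_⟩
  simp only [Function.iterate_one]
  rw [glueId, glue_mem hv]

lemma nat_card_sigma {ι : Type*} [Fintype ι] (fib : ι → Type*) [∀ i, Finite (fib i)] :
    Nat.card (Σ i, fib i) = ∑ i, Nat.card (fib i) := by
  haveI : ∀ i, Fintype (fib i) := fun i => Fintype.ofFinite _
  simp [Nat.card_eq_fintype_card]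

lemma telesc (a : ℕ → ℕ) (h : ∀ j, a (j + 1) ≤ a j) (K : ℕ) :
    ∑ j ∈ Finset.range K, (a j - a (j + 1)) = a 0 - a K := by
  have ha : ∀ j, a j ≤ a 0 := by
    intro j
    induction j with
    | zero => exact le_refl _
    | succ j ih => exact le_trans (h j) ih
  induction K with
  | zero => simp
  | succ K ih =>
    rw [Finset.sum_range_succ, ih]
    have h1 := h K
    have h2 := ha K
    have h3 := ha (K + 1)
    omega

lemma partition_base (S : Finset α) :
    (Fintype.card α) ^ (Fintype.card α - S.card)
      = ∑ U : Finset α, Nat.card {g : {x // x ∉ S} → α // cycSet (glueId S g) = U} := by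
  rw [← nat_card_sigma,
    Nat.card_congr (Equiv.sigmaFiberEquiv (fun g : {x // x ∉ S} → α => cycSet (glueId S g))),
    Nat.card_eq_fintype_card, Fintype.card_fun]
  congr 1
  rw [Fintype.card_subtype_compl, Fintype.card_coe]

lemma base_sum (S : Finset α) :
    (Fintype.card α) ^ (Fintype.card α - S.card)
      = ∑ T ∈ (Sᶜ : Finset α).powerset, Nat.factorial T.card * Fc (S ∪ T) := by
  rw [partition_base S]
  rw [← Finset.sum_filter_add_sum_filter_not Finset.univ (fun U => S ⊆ U)]
  have hz : ∑ U ∈ Finset.univ.filter (fun U => ¬ S ⊆ U),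
      Nat.card {g : {x // x ∉ S} → α // cycSet (glueId S g) = U} = 0 := by
    apply Finset.sum_eq_zero
    intro U hU
    simp only [Finset.mem_filter] at hU
    exact card_fiber_zero S U hU.2
  rw [hz, add_zero]
  refine Finset.sum_nbij' (fun U => U \ S) (fun T => S ∪ T) ?_ ?_ ?_ ?_ ?_
  · intro U hU
    simp only [Finset.mem_filter] at hU
    rw [Finset.mem_powerset]
    intro x hx
    rw [Finset.mem_compl]
    exact (Finset.mem_sdiff.1 hx).2
  · intro T hT
    rw [Finset.mem_powerset] at hT
    simp only [Finset.mem_filter, Finset.mem_univ, true_and]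
    exact Finset.subset_union_left
  · intro U hU
    simp only [Finset.mem_filter] at hU
    exact Finset.union_sdiff_of_subset hU.2
  · intro T hT
    rw [Finset.mem_powerset] at hT
    apply Finset.union_sdiff_cancel_left
    rw [Finset.disjoint_left]
    intro x hxS hxT
    exact (Finset.mem_compl.1 (hT hxT)) hxS
  · intro U hU
    simp only [Finset.mem_filter] at hU
    rw [card_fiber S U hU.2]
    rw [Finset.union_sdiff_of_subset hU.2]

/-- the telescoping identity -/
lemma telescoping (n m N : ℕ) (hnm : N + m = n) :
    ∑ j ∈ Finset.range (m + 1),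
      m.choose j * (Nat.factorial j * ((N + j) * n ^ (m - j))) = n ^ (m + 1) := by
  set a : ℕ → ℕ := fun j => m.descFactorial j * n ^ (m + 1 - j) with ha
  have key : ∀ j, j ≤ m → m.choose j * (Nat.factorial j * ((N + j) * n ^ (m - j)))
      = a j - a (j + 1) := by
    intro j hj
    have h1 : a (j + 1) = (m - j) * (m.descFactorial j * n ^ (m - j)) := by
      rw [ha]
      simp only []
      rw [Nat.descFactorial_succ]
      have : m + 1 - (j + 1) = m - j := by omega
      rw [this]; ring
    have h2 : a j = n * (m.descFactorial j * n ^ (m - j)) := by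
      rw [ha]
      simp only []
      have : m + 1 - j = (m - j) + 1 := by omega
      rw [this, pow_succ]; ring
    rw [h1, h2, ← Nat.sub_mul]
    have h3 : n - (m - j) = N + j := by omega
    rw [h3]
    rw [Nat.descFactorial_eq_factorial_mul_choose]
    ring
  have hle : ∀ j, a (j + 1) ≤ a j := by
    intro j
    by_cases hj : j ≤ m
    · have h1 : a (j + 1) = (m - j) * (m.descFactorial j * n ^ (m - j)) := by
        rw [ha]
        simp only []
        rw [Nat.descFactorial_succ]
        have : m + 1 - (j + 1) = m - j := by omega
        rw [this]; ring
      have h2 : a j = n * (m.descFactorial j * n ^ (m - j)) := by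
        rw [ha]
        simp only []
        have : m + 1 - j = (m - j) + 1 := by omega
        rw [this, pow_succ]; ring
      rw [h1, h2]
      exact Nat.mul_le_mul_right _ (by omega)
    · have hz : m.descFactorial (j + 1) = 0 := by
        rw [Nat.descFactorial_eq_zero_iff_lt]; omega
      rw [ha]; simp only []
      rw [hz]; simp
  rw [Finset.sum_congr rfl (fun j hj => key j (by
    rw [Finset.mem_range] at hj; omega))]
  rw [telesc a hle (m + 1)]
  have h0 : a 0 = n ^ (m + 1) := by rw [ha]; simp
  have hm1 : a (m + 1) = 0 := by
    rw [ha]; simp only []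
    rw [Nat.descFactorial_eq_zero_iff_lt.2 (by omega)]; simp
  omega

lemma Fc_formula : ∀ (m : ℕ) (S : Finset α), S.Nonempty → (Sᶜ : Finset α).card = m →
    Fintype.card α * Fc S = S.card * (Fintype.card α) ^ (Fintype.card α - S.card) := by
  intro m
  induction m using Nat.strong_induction_on with
  | _ m IH =>
    intro S hS hm
    set n := Fintype.card α with hn
    set N := S.card with hN
    have hNn : N ≤ n := by rw [hN, hn]; exact Finset.card_le_univ S
    have hmN : N + m = n := by
      rw [← hm, hN, hn, Finset.card_compl]; omega
    have base := base_sum S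
    have hnN : n - N = m := by omega
    rw [hnN] at base
    -- multiply by n
    have base2 : n ^ (m + 1) = ∑ T ∈ (Sᶜ : Finset α).powerset,
        Nat.factorial T.card * (n * Fc (S ∪ T)) := by
      rw [pow_succ, mul_comm (n ^ m) n, base, Finset.mul_sum]
      apply Finset.sum_congr rfl
      intro T _
      ring
    -- split off empty set
    have hmem : ∅ ∈ (Sᶜ : Finset α).powerset := Finset.empty_mem_powerset _
    rw [← Finset.sum_erase_add _ _ hmem] at base2
    have hempty : Nat.factorial (∅ : Finset α).card * (n * Fc (S ∪ ∅)) = n * Fc S := by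
      simp
    rw [hempty] at base2
    -- rewrite the erased sum via IH
    have hIH : ∀ T ∈ ((Sᶜ : Finset α).powerset).erase ∅,
        Nat.factorial T.card * (n * Fc (S ∪ T))
          = Nat.factorial T.card * ((N + T.card) * n ^ (m - T.card)) := by
      intro T hT
      rw [Finset.mem_erase, Finset.mem_powerset] at hT
      obtain ⟨hTne, hTsub⟩ := hT
      have hdisj : Disjoint S T := by
        rw [Finset.disjoint_left]
        intro x hxS hxT
        exact (Finset.mem_compl.1 (hTsub hxT)) hxS
      have hcard : (S ∪ T).card = N + T.card := by
        rw [Finset.card_union_of_disjoint hdisj, hN]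
      have hTpos : 1 ≤ T.card := Finset.card_pos.2 (Finset.nonempty_iff_ne_empty.2 hTne)
      have hTm : T.card ≤ m := by
        have := Finset.card_le_card hTsub
        omega
      have hcompl : ((S ∪ T)ᶜ : Finset α).card = m - T.card := by
        rw [Finset.card_compl, hcard]; omega
      have := IH (m - T.card) (by omega) (S ∪ T)
        (Finset.Nonempty.inl hS) hcompl
      rw [hcard] at this
      have harith : n - (N + T.card) = m - T.card := by omega
      rw [harith] at this
      rw [this]
  -- identity side
    have ident : ∑ T ∈ (Sᶜ : Finset α).powerset,
        Nat.factorial T.card * ((N + T.card) * n ^ (m - T.card)) = n ^ (m + 1) := by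
      have := Finset.sum_powerset_apply_card
        (fun j => Nat.factorial j * ((N + j) * n ^ (m - j))) (x := (Sᶜ : Finset α))
      rw [this, hm]
      simp only [smul_eq_mul]
      exact telescoping n m N hmN
    rw [← Finset.sum_erase_add _ _ hmem] at ident
    have hempty2 : Nat.factorial (∅ : Finset α).card * ((N + (∅ : Finset α).card)
        * n ^ (m - (∅ : Finset α).card)) = N * n ^ m := by
      simp
    rw [hempty2] at ident
    rw [Finset.sum_congr rfl hIH] at base2
    rw [hnN]
    omega

lemma card_fiber_top (N : ℕ) (S : Finset α) (hS : S.card = N) :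
    Nat.card {x : {f : α → α // (cycSet f).card = N} // cycSet x.1 = S}
      = Nat.factorial N * Fc S := by
  rw [← hS, ← card_cycSet_eq]
  apply Nat.card_congr
  refine (Equiv.subtypeSubtypeEquivSubtypeInter
    (fun f : α → α => (cycSet f).card = S.card) (fun f => cycSet f = S)).trans
    (Equiv.subtypeEquivRight ?_)
  intro f
  constructor
  · exact fun h => h.2
  · intro h; exact ⟨by rw [h], h⟩

lemma card_fiber_top_zero (N : ℕ) (S : Finset α) (hS : S.card ≠ N) :
    Nat.card {x : {f : α → α // (cycSet f).card = N} // cycSet x.1 = S} = 0 := by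
  rw [Nat.card_eq_zero]
  left
  constructor
  rintro ⟨⟨f, hf⟩, hfS⟩
  apply hS
  rw [← hfS]
  exact hf

lemma card_cycCard_eq (N : ℕ) :
    Nat.card {f : α → α // (cycSet f).card = N}
      = ∑ S ∈ Finset.univ.filter (fun S : Finset α => S.card = N),
          Nat.factorial N * Fc S := by
  rw [← Nat.card_congr (Equiv.sigmaFiberEquiv
       (fun x : {f : α → α // (cycSet f).card = N} => cycSet x.1)), nat_card_sigma]
  rw [← Finset.sum_filter_add_sum_filter_not Finset.univ (fun S : Finset α => S.card = N)]
  have hz : ∑ S ∈ Finset.univ.filter (fun S : Finset α => ¬ S.card = N),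
      Nat.card {x : {f : α → α // (cycSet f).card = N} // cycSet x.1 = S} = 0 := by
    apply Finset.sum_eq_zero
    intro S hSf
    simp only [Finset.mem_filter] at hSf
    exact card_fiber_top_zero N S hSf.2
  rw [hz, add_zero]
  apply Finset.sum_congr rfl
  intro S hSf
  simp only [Finset.mem_filter] at hSf
  exact card_fiber_top N S hSf.2

lemma card_filter_card_eq (N : ℕ) :
    (Finset.univ.filter (fun S : Finset α => S.card = N)).card
      = (Fintype.card α).choose N := by
  have h1 : Finset.univ.filter (fun S : Finset α => S.card = N)
      = Finset.powersetCard N (Finset.univ : Finset α) := by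
    rw [Finset.powersetCard_eq_filter, Finset.powerset_univ]
  rw [h1, Finset.card_powersetCard, Finset.card_univ]

theorem main_count (N : ℕ) (hN1 : 1 ≤ N) :
    Fintype.card α * Nat.card {f : α → α // (cycSet f).card = N}
      = (Fintype.card α).choose N * Nat.factorial N * N
          * (Fintype.card α) ^ (Fintype.card α - N) := by
  rw [card_cycCard_eq, Finset.mul_sum]
  have hterm : ∀ S ∈ Finset.univ.filter (fun S : Finset α => S.card = N),
      Fintype.card α * (Nat.factorial N * Fc S)
        = Nat.factorial N * N * (Fintype.card α) ^ (Fintype.card α - N) := by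
    intro S hSf
    simp only [Finset.mem_filter] at hSf
    have hSN := hSf.2
    have hne : S.Nonempty := Finset.card_pos.1 (by omega)
    have := Fc_formula ((Sᶜ : Finset α).card) S hne rfl
    rw [hSN] at this
    calc Fintype.card α * (Nat.factorial N * Fc S)
        = Nat.factorial N * (Fintype.card α * Fc S) := by ring
      _ = Nat.factorial N * (N * (Fintype.card α) ^ (Fintype.card α - N)) := by rw [this]
      _ = Nat.factorial N * N * (Fintype.card α) ^ (Fintype.card α - N) := by ring
  rw [Finset.sum_congr rfl hterm, Finset.sum_const, card_filter_card_eq, smul_eq_mul]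
  ring

lemma count_fin (n N : ℕ) (hN1 : 1 ≤ N) :
    n * Nat.card {f : Fin n → Fin n //
        Nat.card {v : Fin n // ∃ k, 1 ≤ k ∧ f^[k] v = v} = N}
      = n.choose N * Nat.factorial N * N * n ^ (n - N) := by
  have hbr : ∀ f : Fin n → Fin n,
      Nat.card {v : Fin n // ∃ k, 1 ≤ k ∧ f^[k] v = v} = (cycSet f).card := by
    intro f
    have h1 : Nat.card {v : Fin n // ∃ k, 1 ≤ k ∧ f^[k] v = v}
        = Nat.card {v : Fin n // IsCyc f v} :=
      Nat.card_congr (Equiv.subtypeEquivRight (fun v => Iff.rfl))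
    rw [h1, Nat.card_eq_fintype_card, Fintype.card_subtype]
    rfl
  have h2 : Nat.card {f : Fin n → Fin n //
        Nat.card {v : Fin n // ∃ k, 1 ≤ k ∧ f^[k] v = v} = N}
      = Nat.card {f : Fin n → Fin n // (cycSet f).card = N} :=
    Nat.card_congr (Equiv.subtypeEquivRight (fun f => by rw [hbr f]))
  rw [h2]
  have := main_count (α := Fin n) N hN1
  rwa [Fintype.card_fin] at this

lemma cast_descF (n N : ℕ) (h : N ≤ n) :
    (n.descFactorial N : ℝ) = ∏ i ∈ Finset.range N, ((n : ℝ) - i) := by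
  induction N with
  | zero => simp
  | succ N ih =>
    rw [Nat.descFactorial_succ, Finset.prod_range_succ, ← ih (by omega)]
    push_cast [Nat.cast_sub (by omega : N ≤ n)]
    ring

lemma ratio_eq (n N : ℕ) (hN1 : 1 ≤ N) (hNn : N ≤ n) (hn : 1 ≤ n) :
    (Nat.card {f : Fin n → Fin n //
        Nat.card {v : Fin n // ∃ k, 1 ≤ k ∧ f^[k] v = v} = N} : ℝ) / (n : ℝ) ^ n
      = (N : ℝ) / n * ∏ i ∈ Finset.range N, (1 - (i : ℝ) / n) := by
  have hn0 : (n : ℝ) ≠ 0 := by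
    simp only [ne_eq, Nat.cast_eq_zero]; omega
  set A := Nat.card {f : Fin n → Fin n //
      Nat.card {v : Fin n // ∃ k, 1 ≤ k ∧ f^[k] v = v} = N} with hAdef
  have hcount := count_fin n N hN1
  have hdesc : n.choose N * Nat.factorial N = n.descFactorial N := by
    rw [Nat.descFactorial_eq_factorial_mul_choose]; ring
  rw [hdesc] at hcount
  have hR : (n : ℝ) * A = (∏ i ∈ Finset.range N, ((n : ℝ) - i)) * N * (n : ℝ) ^ (n - N) := by
    have h := congrArg (Nat.cast : ℕ → ℝ) hcount
    push_cast at h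
    rw [cast_descF n N hNn] at h
    exact h
  have hprod : ∏ i ∈ Finset.range N, (1 - (i : ℝ) / n)
      = (∏ i ∈ Finset.range N, ((n : ℝ) - i)) / (n : ℝ) ^ N := by
    rw [eq_div_iff (pow_ne_zero _ hn0),
      show (n : ℝ) ^ N = ∏ _i ∈ Finset.range N, (n : ℝ) by
        rw [Finset.prod_const, Finset.card_range], ← Finset.prod_mul_distrib]
    apply Finset.prod_congr rfl
    intro i _
    field_simp
  rw [hprod, div_mul_div_comm, div_eq_div_iff (by positivity) (by positivity)]
  have hp : (n : ℝ) ^ (n - N) * (n : ℝ) ^ N = (n : ℝ) ^ n := by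
    rw [← pow_add]
    congr 1
    omega
  calc (A : ℝ) * ((n : ℝ) * (n : ℝ) ^ N)
      = ((n : ℝ) * A) * (n : ℝ) ^ N := by ring
    _ = ((∏ i ∈ Finset.range N, ((n : ℝ) - i)) * N * (n : ℝ) ^ (n - N)) * (n : ℝ) ^ N := by
        rw [hR]
    _ = (N : ℝ) * (∏ i ∈ Finset.range N, ((n : ℝ) - i))
          * ((n : ℝ) ^ (n - N) * (n : ℝ) ^ N) := by ring
    _ = (N : ℝ) * (∏ i ∈ Finset.range N, ((n : ℝ) - i)) * (n : ℝ) ^ n := by rw [hp]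

lemma log_one_sub_le {x : ℝ} (h0 : 0 ≤ x) (h1 : x < 1) : Real.log (1 - x) ≤ -x := by
  have := Real.log_le_sub_one_of_pos (by linarith : (0:ℝ) < 1 - x)
  linarith

lemma le_log_one_sub {x : ℝ} (h0 : 0 ≤ x) (h1 : x ≤ 1/2) :
    -x - 2 * x ^ 2 ≤ Real.log (1 - x) := by
  have hpos : (0:ℝ) < 1 - x := by linarith
  have hinv : Real.log (1 - x)⁻¹ ≤ (1 - x)⁻¹ - 1 :=
    Real.log_le_sub_one_of_pos (by positivity)
  rw [Real.log_inv] at hinv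
  have h2 : (1 - x)⁻¹ - 1 = x / (1 - x) := by field_simp; ring
  rw [h2] at hinv
  have h3 : x / (1 - x) ≤ x + 2 * x ^ 2 := by
    rw [div_le_iff₀ hpos]
    nlinarith
  linarith

lemma prod_estimate (n N : ℕ) (hN1 : 1 ≤ N) (h2N : 2 * N ≤ n) (ε : ℝ)
    (hε1 : ε ≤ 1)
    (hbound : (N : ℝ) / n + 2 * (N : ℝ) ^ 3 / (n : ℝ) ^ 2 ≤ ε) :
    |∏ i ∈ Finset.range N, (1 - (i : ℝ) / n) - Real.exp (-(N : ℝ) ^ 2 / (2 * n))|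
      ≤ 2 * ε * Real.exp (-(N : ℝ) ^ 2 / (2 * n)) := by
  have hn1 : 1 ≤ n := by omega
  have hnR : (0:ℝ) < n := by
    have : (1:ℝ) ≤ n := by exact_mod_cast hn1
    linarith
  have hx : ∀ i ∈ Finset.range N, 0 ≤ (i : ℝ) / n ∧ (i : ℝ) / n ≤ 1/2 := by
    intro i hi
    rw [Finset.mem_range] at hi
    constructor
    · positivity
    · rw [div_le_iff₀ hnR]
      have h1 : (2 : ℝ) * i ≤ n := by
        have : 2 * i ≤ n := by omega
        exact_mod_cast this
      linarith
  have hfac : ∀ i ∈ Finset.range N, (0:ℝ) < 1 - (i : ℝ) / n := by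
    intro i hi
    have := (hx i hi).2
    linarith
  set Q := ∏ i ∈ Finset.range N, (1 - (i : ℝ) / n) with hQ
  have hQpos : 0 < Q := Finset.prod_pos hfac
  have hlogQ : Real.log Q = ∑ i ∈ Finset.range N, Real.log (1 - (i : ℝ) / n) :=
    Real.log_prod (fun i hi => ne_of_gt (hfac i hi))
  -- sum of i/n
  have hsum1 : ∑ i ∈ Finset.range N, (i : ℝ) / n = ((N : ℝ) ^ 2 - N) / (2 * n) := by
    rw [← Finset.sum_div]
    have h := Finset.sum_range_id_mul_two N
    have hcast : (∑ i ∈ Finset.range N, (i : ℝ)) * 2 = (N : ℝ) * ((N : ℝ) - 1) := by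
      have := congrArg (Nat.cast : ℕ → ℝ) h
      push_cast [Nat.cast_sub (by omega : 1 ≤ N)] at this
      exact this
    have : ∑ i ∈ Finset.range N, (i : ℝ) = ((N : ℝ) ^ 2 - N) / 2 := by linarith [hcast]
    rw [this]
    field_simp
  have hsum2 : ∑ i ∈ Finset.range N, ((i : ℝ) / n) ^ 2 ≤ (N : ℝ) ^ 3 / (n : ℝ) ^ 2 := by
    have hb : ∀ i ∈ Finset.range N, ((i : ℝ) / n) ^ 2 ≤ (N : ℝ) ^ 2 / (n : ℝ) ^ 2 := by
      intro i hi
      rw [Finset.mem_range] at hi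
      have hiN : (i : ℝ) ≤ N := by exact_mod_cast hi.le
      have h0 : (0:ℝ) ≤ i := by positivity
      rw [div_pow]
      apply div_le_div_of_nonneg_right ?_ (by positivity)
      · nlinarith
    calc ∑ i ∈ Finset.range N, ((i : ℝ) / n) ^ 2
        ≤ ∑ _i ∈ Finset.range N, (N : ℝ) ^ 2 / (n : ℝ) ^ 2 := Finset.sum_le_sum hb
      _ = N * ((N : ℝ) ^ 2 / (n : ℝ) ^ 2) := by
          rw [Finset.sum_const, Finset.card_range, nsmul_eq_mul]
      _ = (N : ℝ) ^ 3 / (n : ℝ) ^ 2 := by ring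
  -- bounds on log Q
  have hup : Real.log Q ≤ -(((N : ℝ) ^ 2 - N) / (2 * n)) := by
    rw [hlogQ, ← hsum1]
    rw [← Finset.sum_neg_distrib]
    apply Finset.sum_le_sum
    intro i hi
    exact log_one_sub_le (hx i hi).1 (by linarith [(hx i hi).2])
  have hlo : -(((N : ℝ) ^ 2 - N) / (2 * n)) - 2 * ((N : ℝ) ^ 3 / (n : ℝ) ^ 2)
      ≤ Real.log Q := by
    rw [hlogQ]
    have : ∑ i ∈ Finset.range N, (-((i : ℝ) / n) - 2 * ((i : ℝ) / n) ^ 2)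
        ≤ ∑ i ∈ Finset.range N, Real.log (1 - (i : ℝ) / n) := by
      apply Finset.sum_le_sum
      intro i hi
      exact le_log_one_sub (hx i hi).1 (hx i hi).2
    have hsplit : ∑ i ∈ Finset.range N, (-((i : ℝ) / n) - 2 * ((i : ℝ) / n) ^ 2)
        = -(((N : ℝ) ^ 2 - N) / (2 * n)) - 2 * ∑ i ∈ Finset.range N, ((i : ℝ) / n) ^ 2 := by
      rw [Finset.sum_sub_distrib, Finset.sum_neg_distrib, hsum1, ← Finset.mul_sum]
    have h2 : -(((N : ℝ) ^ 2 - N) / (2 * n)) - 2 * ((N : ℝ) ^ 3 / (n : ℝ) ^ 2)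
        ≤ ∑ i ∈ Finset.range N, (-((i : ℝ) / n) - 2 * ((i : ℝ) / n) ^ 2) := by
      rw [hsplit]
      have := hsum2
      linarith
    linarith
  -- |log Q + N^2/(2n)| ≤ ε
  set u := Real.log Q + (N : ℝ) ^ 2 / (2 * n) with hu
  have huabs : |u| ≤ ε := by
    rw [abs_le]
    constructor
    · have : -(((N : ℝ) ^ 2 - N) / (2 * n)) + (N : ℝ) ^ 2 / (2 * n)
          = (N : ℝ) / (2 * n) := by ring
      have hb2 : 2 * ((N : ℝ) ^ 3 / (n : ℝ) ^ 2) ≤ ε := by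
        have hN0 : (0:ℝ) ≤ (N : ℝ) / n := by positivity
        calc 2 * ((N : ℝ) ^ 3 / (n : ℝ) ^ 2) = 2 * (N : ℝ) ^ 3 / (n : ℝ) ^ 2 := by ring
          _ ≤ (N : ℝ) / n + 2 * (N : ℝ) ^ 3 / (n : ℝ) ^ 2 := by linarith
          _ ≤ ε := hbound
      have hpos2 : (0:ℝ) ≤ (N : ℝ) / (2 * n) := by positivity
      rw [hu]
      linarith [hlo]
    · rw [hu]
      have halg : -(((N : ℝ) ^ 2 - N) / (2 * n)) + (N : ℝ) ^ 2 / (2 * n)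
          = (N : ℝ) / (2 * n) := by ring
      have hb1 : (N : ℝ) / (2 * n) ≤ ε := by
        have h1 : (N : ℝ) / (2 * n) ≤ (N : ℝ) / n := by
          apply div_le_div_of_nonneg_left (by positivity) hnR
          linarith
        have h2 : (0:ℝ) ≤ 2 * (N : ℝ) ^ 3 / (n : ℝ) ^ 2 := by positivity
        linarith [hbound]
      linarith [hup]
  -- conclude
  set E := Real.exp (-(N : ℝ) ^ 2 / (2 * n)) with hE
  have hEpos : 0 < E := Real.exp_pos _
  have hQE : Q = E * Real.exp u := by
    rw [hE, ← Real.exp_add]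
    rw [show -(N : ℝ) ^ 2 / (2 * n) + u = Real.log Q by rw [hu]; ring]
    rw [Real.exp_log hQpos]
  have h1 : |Real.exp u - 1| ≤ 2 * |u| :=
    Real.abs_exp_sub_one_le (le_trans huabs hε1)
  calc |Q - E| = |E * (Real.exp u - 1)| := by rw [hQE]; ring_nf
    _ = E * |Real.exp u - 1| := by rw [abs_mul, abs_of_pos hEpos]
    _ ≤ E * (2 * |u|) := by
        apply mul_le_mul_of_nonneg_left h1 (le_of_lt hEpos)
    _ ≤ E * (2 * ε) := by
        apply mul_le_mul_of_nonneg_left ?_ (le_of_lt hEpos)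
        linarith
    _ = 2 * ε * E := by ring

end Stmt7

/-- For a uniformly random mapping of `n` elements, uniformly for
`n^{1/5} < N < 4√(n ln n)`, the probability that the number of cyclic vertices
equals `N` is `(1+o(1))·(N/n)·e^{-N²/(2n)}` as `n → ∞`. -/
theorem stmt_7 :
    ∀ δ : ℝ, 0 < δ → ∃ n₀ : ℕ, ∀ n : ℕ, n₀ ≤ n → ∀ N : ℕ,
      (n : ℝ) ^ ((1 : ℝ) / 5) < (N : ℝ) →
      (N : ℝ) < 4 * Real.sqrt (n * Real.log n) →
      |(Nat.card {f : Fin n → Fin n //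
            Nat.card {v : Fin n // ∃ k, 1 ≤ k ∧ f^[k] v = v} = N} : ℝ) / (n : ℝ) ^ n
          - (N : ℝ) / n * Real.exp (-(N : ℝ) ^ 2 / (2 * n))|
        ≤ δ * ((N : ℝ) / n * Real.exp (-(N : ℝ) ^ 2 / (2 * n))) := by
  intro δ hδ
  set ε : ℝ := min δ 1 / 4 with hεdef
  have hεpos : 0 < ε := by
    rw [hεdef]
    have : 0 < min δ 1 := lt_min hδ one_pos
    linarith
  have hε1 : ε ≤ 1 := by
    rw [hεdef]
    have : min δ 1 ≤ 1 := min_le_right _ _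
    linarith
  have h2ε : 2 * ε ≤ δ := by
    rw [hεdef]
    have : min δ 1 ≤ δ := min_le_left _ _
    linarith
  refine ⟨max 16384 (⌈(8448 / ε) ^ 4⌉₊ + 3), ?_⟩
  intro n hn N hlow hup
  have hn16384 : 16384 ≤ n := le_trans (le_max_left _ _) hn
  have hnceil : ⌈(8448 / ε) ^ 4⌉₊ + 3 ≤ n := le_trans (le_max_right _ _) hn
  have hn1 : 1 ≤ n := by omega
  have hn3 : 3 ≤ n := by omega
  have hnR : (0:ℝ) < n := by exact_mod_cast Nat.lt_of_lt_of_le (by norm_num) hn1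
  have hnR1 : (1:ℝ) ≤ n := by exact_mod_cast hn1
  -- sqrt towers
  set s1 : ℝ := Real.sqrt n with hs1
  set s2 : ℝ := Real.sqrt s1 with hs2
  set s3 : ℝ := Real.sqrt s2 with hs3
  have hs1sq : s1 ^ 2 = n := Real.sq_sqrt (le_of_lt hnR)
  have hs1pos : 0 < s1 := Real.sqrt_pos.2 hnR
  have hs2sq : s2 ^ 2 = s1 := Real.sq_sqrt (le_of_lt hs1pos)
  have hs2pos : 0 < s2 := Real.sqrt_pos.2 hs1pos
  have hs3sq : s3 ^ 2 = s2 := Real.sq_sqrt (le_of_lt hs2pos)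
  have hs3pos : 0 < s3 := Real.sqrt_pos.2 hs2pos
  have hs1_128 : (128:ℝ) ≤ s1 := by
    have h16 : (16384:ℝ) ≤ n := by exact_mod_cast hn16384
    nlinarith [hs1pos.le, hs1sq]
  -- log facts
  have hlog_nonneg : 0 ≤ Real.log n := Real.log_nonneg hnR1
  have hlog1 : 1 ≤ Real.log n := by
    have h3 : (3:ℝ) ≤ n := by exact_mod_cast hn3
    have : Real.exp 1 ≤ 3 := by
      have := Real.exp_one_lt_d9
      linarith
    have hlog3 : 1 ≤ Real.log 3 := by
      rw [Real.le_log_iff_exp_le (by norm_num)]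
      exact this
    have := Real.log_le_log (by norm_num) h3
    linarith
  have hlogs1 : Real.log s1 = Real.log n / 2 := Real.log_sqrt (le_of_lt hnR)
  have hlogs2 : Real.log s2 = Real.log n / 4 := by
    rw [hs2, Real.log_sqrt (le_of_lt hs1pos), hlogs1]; ring
  have hlogs3 : Real.log s3 = Real.log n / 8 := by
    rw [hs3, Real.log_sqrt (le_of_lt hs2pos), hlogs2]; ring
  have hlogn_le : Real.log n ≤ 8 * s3 := by
    have := Real.log_le_sub_one_of_pos hs3pos
    rw [hlogs3] at this
    linarith
  have hlogsq : (Real.log n) ^ 2 ≤ 64 * s2 := by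
    have h1 : (Real.log n) ^ 2 ≤ (8 * s3) ^ 2 := by
      apply pow_le_pow_left₀ hlog_nonneg hlogn_le
    calc (Real.log n) ^ 2 ≤ (8 * s3) ^ 2 := h1
      _ = 64 * s3 ^ 2 := by ring
      _ = 64 * s2 := by rw [hs3sq]
  -- s2 is large
  have hs2large : 8448 / ε ≤ s2 := by
    have hs2four : s2 ^ 4 = n := by
      have : s2 ^ 4 = (s2 ^ 2) ^ 2 := by ring
      rw [this, hs2sq, hs1sq]
    have hceil : ((8448 / ε) ^ 4 : ℝ) ≤ n := by
      have h1 : (⌈(8448 / ε) ^ 4⌉₊ : ℝ) ≤ n := by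
        exact_mod_cast Nat.le_of_succ_le (by omega : ⌈(8448 / ε) ^ 4⌉₊ + 1 ≤ n)
      exact le_trans (Nat.le_ceil _) h1
    rw [← hs2four] at hceil
    exact le_of_pow_le_pow_left₀ (by norm_num) (le_of_lt hs2pos) hceil
  -- t = sqrt (log n)
  set t : ℝ := Real.sqrt (Real.log n) with ht
  have htsq : t ^ 2 = Real.log n := Real.sq_sqrt hlog_nonneg
  have ht1 : 1 ≤ t := by
    nlinarith [Real.sqrt_nonneg (Real.log n), htsq]
  -- N bounds
  have hNpos : 1 ≤ N := by
    by_contra h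
    have hN0 : N = 0 := by omega
    rw [hN0] at hlow
    have := Real.rpow_pos_of_pos hnR ((1:ℝ)/5)
    simp at hlow
    linarith
  have hNR : (0:ℝ) ≤ N := by positivity
  have hsplit : Real.sqrt ((n : ℝ) * Real.log n) = s1 * t := by
    rw [hs1, ht, ← Real.sqrt_mul (le_of_lt hnR)]
  have hNlt : (N : ℝ) < 4 * s1 * t := by
    rw [hsplit] at hup
    linarith
  -- 2N ≤ n
  have h8t : 8 * t ≤ s1 := by
    have h64 : 64 * Real.log n ≤ 128 * s1 := by
      have := Real.log_le_sub_one_of_pos hs1pos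
      rw [hlogs1] at this
      linarith
    have hsq : (8 * t) ^ 2 ≤ s1 ^ 2 := by
      have : (8 * t) ^ 2 = 64 * Real.log n := by rw [mul_pow, htsq]; ring
      rw [this, hs1sq]
      nlinarith [hs1_128, hs1sq, hs1pos.le]
    nlinarith [hsq, hs1pos.le, Real.sqrt_nonneg (Real.log n)]
  have hNn2 : (N : ℝ) < (n : ℝ) / 2 := by
    have : 4 * s1 * t ≤ s1 * s1 / 2 := by nlinarith [hs1pos.le]
    rw [← hs1sq]
    nlinarith [hNlt]
  have h2N : 2 * N ≤ n := by
    have : ((2 * N : ℕ) : ℝ) < n := by push_cast; linarith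
    exact_mod_cast le_of_lt (by exact_mod_cast this : (2 * N : ℕ) < n)
  have hNn : N ≤ n := by omega
  -- the error bound
  have hbound : (N : ℝ) / n + 2 * (N : ℝ) ^ 3 / (n : ℝ) ^ 2 ≤ ε := by
    have h1 : (N : ℝ) / n ≤ 4 * t / s1 := by
      rw [div_le_div_iff₀ hnR hs1pos]
      have hn_eq : (n : ℝ) = s1 ^ 2 := hs1sq.symm
      rw [hn_eq]
      nlinarith [hNlt, hs1pos.le, ht1]
    have hcube : (N : ℝ) ^ 3 ≤ (4 * s1 * t) ^ 3 :=
      pow_le_pow_left₀ hNR (le_of_lt hNlt) 3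
    have h2 : 2 * (N : ℝ) ^ 3 / (n : ℝ) ^ 2 ≤ 128 * t ^ 3 / s1 := by
      rw [div_le_div_iff₀ (by positivity) hs1pos]
      have hn_eq : (n : ℝ) = s1 ^ 2 := hs1sq.symm
      rw [hn_eq]
      have e1 : (4 * s1 * t) ^ 3 = 64 * s1 ^ 3 * t ^ 3 := by ring
      have hc2 : (N : ℝ) ^ 3 ≤ 64 * s1 ^ 3 * t ^ 3 := by rw [← e1]; exact hcube
      have m1 : 2 * (N : ℝ) ^ 3 ≤ 2 * (64 * s1 ^ 3 * t ^ 3) := by linarith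
      have m2 := mul_le_mul_of_nonneg_right m1 hs1pos.le
      have m3 : 2 * (64 * s1 ^ 3 * t ^ 3) * s1 = 128 * t ^ 3 * (s1 ^ 2) ^ 2 := by ring
      linarith [m2]
    have h3 : 4 * t / s1 + 128 * t ^ 3 / s1 ≤ 132 * t ^ 3 / s1 := by
      rw [← add_div, div_le_div_iff₀ hs1pos hs1pos]
      have m1 : 4 * t + 128 * t ^ 3 ≤ 132 * t ^ 3 := by nlinarith [ht1]
      have m2 := mul_le_mul_of_nonneg_right m1 hs1pos.le
      linarith [m2]
    have h4 : 132 * t ^ 3 / s1 ≤ 132 * (Real.log n) ^ 2 / s1 := by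
      have h34 : t ^ 3 ≤ t ^ 4 := by
        have hm := mul_le_mul_of_nonneg_left ht1 (by positivity : (0:ℝ) ≤ t ^ 3)
        have he : t ^ 3 * t = t ^ 4 := by ring
        linarith
      have ht4 : t ^ 4 = (Real.log n) ^ 2 := by
        have e : t ^ 4 = (t ^ 2) ^ 2 := by ring
        rw [e, htsq]
      have h35 : t ^ 3 ≤ (Real.log n) ^ 2 := by rw [← ht4]; exact h34
      rw [div_le_div_iff₀ hs1pos hs1pos]
      have m1 : 132 * t ^ 3 ≤ 132 * (Real.log n) ^ 2 := by linarith
      have m2 := mul_le_mul_of_nonneg_right m1 hs1pos.le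
      linarith [m2]
    have h5 : 132 * (Real.log n) ^ 2 / s1 ≤ ε := by
      have hs1_eq : s1 = s2 ^ 2 := hs2sq.symm
      have key : 132 * (Real.log n) ^ 2 / s1 ≤ 8448 / s2 := by
        rw [hs1_eq, div_le_div_iff₀ (by positivity) hs2pos]
        nlinarith [hlogsq, hs2pos.le]
      have : 8448 / s2 ≤ ε := by
        rw [div_le_iff₀ hs2pos]
        rw [div_le_iff₀ hεpos] at hs2large
        linarith
      linarith
    linarith
  -- final computation
  rw [Stmt7.ratio_eq n N hNpos hNn hn1]
  have hest := Stmt7.prod_estimate n N hNpos h2N ε hε1 hbound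
  set Q := ∏ i ∈ Finset.range N, (1 - (i : ℝ) / n) with hQ
  set E := Real.exp (-(N : ℝ) ^ 2 / (2 * n)) with hE
  have hEpos : 0 < E := Real.exp_pos _
  have hNn0 : 0 ≤ (N : ℝ) / n := by positivity
  calc |(N : ℝ) / n * Q - (N : ℝ) / n * E| = (N : ℝ) / n * |Q - E| := by
        rw [← mul_sub, abs_mul, abs_of_nonneg hNn0]
    _ ≤ (N : ℝ) / n * (2 * ε * E) := mul_le_mul_of_nonneg_left hest hNn0
    _ ≤ (N : ℝ) / n * (δ * E) := by
        apply mul_le_mul_of_nonneg_left ?_ hNn0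
        apply mul_le_mul_of_nonneg_right h2ε (le_of_lt hEpos)
    _ = δ * ((N : ℝ) / n * E) := by ring
end

section
/- Let ν_k be the total progeny of a Galton–Watson process with k founding ancestors and Poisson(1) offspring distribution. Then there exists a constant c > 0 such that P(ν_k ≤ 2k) ≤ c·e^{-k/5} for all k ≥ 1. -/
/-- Total progeny `ν_k` of a Galton–Watson process with `k` ancestors and Poisson(1)
offspring follows the Borel–Tanner distribution `P(ν_k = m) = (k/m) m^{m−k} e^{-m}/(m−k)!`.
There is `c > 0` with `P(ν_k ≤ 2k) ≤ c e^{-k/5}` for all `k ≥ 1`. -/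
theorem stmt_11 :
    ∃ c : ℝ, 0 < c ∧ ∀ k : ℕ, 1 ≤ k →
      (∑ m ∈ Finset.Icc k (2 * k),
          (k : ℝ) / m * (m : ℝ) ^ (m - k) * Real.exp (-(m : ℝ)) / (Nat.factorial (m - k) : ℝ))
        ≤ c * Real.exp (-(k : ℝ) / 5) := by
  refine ⟨1, one_pos, fun k hk => ?_⟩
  set x : ℝ := 2 * k / Real.exp 1 with hxdef
  have hx : (0:ℝ) ≤ x := by positivity
  have step1 : (∑ m ∈ Finset.Icc k (2 * k),
          (k : ℝ) / m * (m : ℝ) ^ (m - k) * Real.exp (-(m : ℝ)) / (Nat.factorial (m - k) : ℝ))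
      ≤ ∑ m ∈ Finset.Icc k (2 * k),
          Real.exp (-(k:ℝ)) * x ^ (m - k) / (Nat.factorial (m - k) : ℝ) := by
    apply Finset.sum_le_sum
    intro m hm
    rw [Finset.mem_Icc] at hm
    obtain ⟨h1, h2⟩ := hm
    have hm1 : 1 ≤ m := le_trans hk h1
    have hmr : (m : ℝ) = (k : ℝ) + ((m - k : ℕ) : ℝ) := by
      push_cast [Nat.cast_sub h1]; ring
    have hkm : (k : ℝ) / m ≤ 1 := by
      rw [div_le_one (by positivity)]; exact_mod_cast h1
    have hpow : (m : ℝ) ^ (m - k) ≤ (2 * k : ℝ) ^ (m - k) := by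
      apply pow_le_pow_left₀ (by positivity)
      exact_mod_cast h2
    have hexp : Real.exp (-(m:ℝ)) = Real.exp (-(k:ℝ)) * (Real.exp 1 ^ (m - k))⁻¹ := by
      rw [← Real.exp_nat_mul, ← Real.exp_neg, ← Real.exp_add, hmr, Real.exp_eq_exp]
      ring
    calc (k : ℝ) / m * (m : ℝ) ^ (m - k) * Real.exp (-(m : ℝ)) / (Nat.factorial (m - k) : ℝ)
        ≤ 1 * (2 * k : ℝ) ^ (m - k) * Real.exp (-(m : ℝ)) / (Nat.factorial (m - k) : ℝ) := by
          gcongr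
      _ = Real.exp (-(k:ℝ)) * x ^ (m - k) / (Nat.factorial (m - k) : ℝ) := by
          rw [hexp, hxdef, div_pow]
          field_simp
  have step2 : (∑ m ∈ Finset.Icc k (2 * k),
          Real.exp (-(k:ℝ)) * x ^ (m - k) / (Nat.factorial (m - k) : ℝ))
      = Real.exp (-(k:ℝ)) * ∑ j ∈ Finset.range (k + 1), x ^ j / (Nat.factorial j : ℝ) := by
    rw [← Finset.Ico_add_one_right_eq_Icc, Finset.sum_Ico_eq_sum_range, Finset.mul_sum]
    have h : 2 * k + 1 - k = k + 1 := by omega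
    rw [h]
    apply Finset.sum_congr rfl
    intro j _
    rw [Nat.add_sub_cancel_left]
    ring
  have step3 : ∑ j ∈ Finset.range (k + 1), x ^ j / (Nat.factorial j : ℝ) ≤ Real.exp x :=
    Real.sum_le_exp_of_nonneg hx _
  have step4 : Real.exp (-(k:ℝ)) * Real.exp x ≤ Real.exp (-(k:ℝ)/5) := by
    rw [← Real.exp_add, Real.exp_le_exp]
    have he : (5:ℝ)/2 ≤ Real.exp 1 := by
      have := Real.add_one_le_exp (1:ℝ)
      linarith [Real.add_one_le_exp (1:ℝ), Real.exp_one_gt_d9]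
    have hx2 : x ≤ 4 * k / 5 := by
      rw [hxdef, div_le_div_iff₀ (Real.exp_pos 1) (by norm_num)]
      have hk0 : (0:ℝ) ≤ k := Nat.cast_nonneg k
      nlinarith
    linarith
  calc _ ≤ Real.exp (-(k:ℝ)) * ∑ j ∈ Finset.range (k + 1), x ^ j / (Nat.factorial j : ℝ) :=
        step2 ▸ step1
    _ ≤ Real.exp (-(k:ℝ)) * Real.exp x := by
        exact mul_le_mul_of_nonneg_left step3 (Real.exp_pos _).le
    _ ≤ 1 * Real.exp (-(k:ℝ)/5) := by rw [one_mul]; exact step4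
end
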